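/- Let Γ be a signed graph of order n, let x = (x1,…,xn)ᵀ be an eigenvector of A(Γ) associated with the largest eigenvalue λ1(Γ), and let v_r v_s be a negative edge of Γ with x_r x_s ≥ 0 and with x_r and x_s not both zero. If Γ' is the signed graph obtained from Γ either by removing the edge v_r v_s or by reversing its sign to positive, then λ1(Γ') > λ1(Γ). -/

import Mathlib

structure SignedGraph (V : Type*) where
  G : SimpleGraph V
  sign : V → V → ℤ
  sign_symm : ∀ u v, sign u v = sign v u
  sign_mem : ∀ u v, G.Adj u v → sign u v = 1 ∨ sign u v = -1
  sign_not : ∀ u v, ¬ G.Adj u v → sign u v = 0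

namespace SignedGraph

variable {V : Type*}

/-- The adjacency matrix of a signed graph, over `ℝ`. -/
noncomputable def adjMatrix (Γ : SignedGraph V) : Matrix V V ℝ :=
  fun u v => (Γ.sign u v : ℝ)

/-- The largest eigenvalue `λ₁` of a signed graph. -/
noncomputable def lambda1 (Γ : SignedGraph V) [Fintype V] : ℝ :=
  letI := Classical.decEq V
  sSup (spectrum ℝ Γ.adjMatrix)

/-- The smallest eigenvalue `λₙ` of a signed graph. -/
noncomputable def lambdaMin (Γ : SignedGraph V) [Fintype V] : ℝ :=
  letI := Classical.decEq V
  sInf (spectrum ℝ Γ.adjMatrix)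

/-- The spectral radius `ρ = max {λ₁, -λₙ}` of a signed graph. -/
noncomputable def rho (Γ : SignedGraph V) [Fintype V] : ℝ :=
  max Γ.lambda1 (-Γ.lambdaMin)

/-- The sign (product of edge signs) of a walk. -/
def walkSign (Γ : SignedGraph V) {G' : SimpleGraph V} : ∀ {u v : V}, G'.Walk u v → ℤ
  | _, _, .nil => 1
  | _, _, .cons (u := a) (v := b) _ p => Γ.sign a b * walkSign Γ p

/-- A signed graph is balanced if every cycle is positive. -/
def Balanced (Γ : SignedGraph V) : Prop :=
  ∀ (u : V) (w : Γ.G.Walk u u), w.IsCycle → Γ.walkSign w = 1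

def Unbalanced (Γ : SignedGraph V) : Prop := ¬ Γ.Balanced

/-- `Γ` has a negative cycle of length `k`. -/
def HasNegCycleOfLength (Γ : SignedGraph V) (k : ℕ) : Prop :=
  ∃ (u : V) (w : Γ.G.Walk u u), w.IsCycle ∧ Γ.walkSign w = -1 ∧ w.length = k

/-- Switching equivalence: same underlying graph and signs related by a switching function. -/
def SwitchingEquivalent (Γ Γ' : SignedGraph V) : Prop :=
  Γ.G = Γ'.G ∧ ∃ s : V → ℤ, (∀ v, s v = 1 ∨ s v = -1) ∧
    ∀ u v, Γ'.sign u v = s u * Γ.sign u v * s v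

/-- Switching isomorphism. -/
def SwitchingIsomorphic {V' : Type*} (Γ : SignedGraph V) (Γ' : SignedGraph V') : Prop :=
  ∃ (e : V ≃ V') (s : V → ℤ), (∀ v, s v = 1 ∨ s v = -1) ∧
    (∀ u v, Γ'.G.Adj (e u) (e v) ↔ Γ.G.Adj u v) ∧
    (∀ u v, Γ'.sign (e u) (e v) = s u * Γ.sign u v * s v)

/-- Build a signed graph from a symmetric sign function with values in `{0, 1, -1}`. -/
def ofSign (s : V → V → ℤ) (hsymm : ∀ u v, s u v = s v u)
    (hloop : ∀ v, s v v = 0)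
    (hval : ∀ u v, s u v = 0 ∨ s u v = 1 ∨ s u v = -1) : SignedGraph V where
  G := { Adj := fun u v => s u v ≠ 0
         symm := ⟨fun u v h => by
           show s v u ≠ 0
           rw [hsymm v u]; exact h⟩
         loopless := ⟨fun v h => h (hloop v)⟩ }
  sign := s
  sign_symm := hsymm
  sign_mem := fun u v h => (hval u v).resolve_left h
  sign_not := fun u v h => not_not.mp h

/-- Build a signed graph on `Fin n` from a sign function on ordered pairs of naturals. -/
def ofMinMaxAux (n : ℕ) (aux : ℕ → ℕ → ℤ) (h0 : ∀ a, aux a a = 0)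
    (hval : ∀ a b, aux a b = 0 ∨ aux a b = 1 ∨ aux a b = -1) : SignedGraph (Fin n) :=
  ofSign (fun i j => aux (min i.val j.val) (max i.val j.val))
    (fun i j => by
      show aux (min i.val j.val) (max i.val j.val) = aux (min j.val i.val) (max j.val i.val)
      rw [min_comm, max_comm])
    (fun i => by
      show aux (min i.val i.val) (max i.val i.val) = 0
      rw [min_self, max_self, h0])
    (fun i j => hval _ _)

def gammaNAux : ℕ → ℕ → ℤ := fun a b =>
  if a = b then 0
  else if a = 0 ∧ b = 1 then -1
  else if a = 0 ∧ b = 2 then 1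
  else if a = 1 ∧ b = 3 then 1
  else if 2 ≤ a ∧ a < b ∧ ¬(a = 2 ∧ b = 3) then 1
  else 0

/-- The signed graph `Γₙ`: a copy of `K_{n-2}` (on `{2, …, n-1}`) with the edge `{2,3}`
removed, together with two new vertices `0, 1` and edges `{0,1}` (negative),
`{0,2}` and `{1,3}` (positive); all other edges positive. -/
def GammaN (n : ℕ) : SignedGraph (Fin n) :=
  ofMinMaxAux n gammaNAux (fun a => by simp [gammaNAux])
    (fun a b => by unfold gammaNAux; split_ifs <;> simp)

def gammaNTauAux (τ : ℕ) : ℕ → ℕ → ℤ := fun a b =>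
  if a = b then 0
  else if a = 0 ∧ b = 1 then -1
  else if a = 0 ∧ b = 3 then 1
  else if a = 0 ∧ 4 ≤ b ∧ b ≤ τ + 3 then 1
  else if a = 1 ∧ b = 2 then 1
  else if a = 2 ∧ τ + 4 ≤ b then 1
  else if a = 3 ∧ 4 ≤ b then 1
  else if 4 ≤ a ∧ a < b then 1
  else 0

/-- The signed graph `Γ_{n,τ}`: here `v₁ = 0`, `v₂ = 1`, `v₃ = 2`, `v₅ = 3`,
`X = {4, …, τ+3}`, `Y = {τ+4, …, n-1}` (with `v₄ = τ+4 ∈ Y`); the edge `{0,1}` is the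
unique negative edge. -/
def GammaNTau (n τ : ℕ) : SignedGraph (Fin n) :=
  ofMinMaxAux n (gammaNTauAux τ) (fun a => by simp [gammaNTauAux])
    (fun a b => by unfold gammaNTauAux; split_ifs <;> simp)

/-- The negation `-Γ` of a signed graph. -/
def neg (Γ : SignedGraph V) : SignedGraph V where
  G := Γ.G
  sign := fun u v => - Γ.sign u v
  sign_symm := fun u v => by
    show -Γ.sign u v = -Γ.sign v u
    rw [Γ.sign_symm]
  sign_mem := fun u v h => by
    show -Γ.sign u v = 1 ∨ -Γ.sign u v = -1
    rcases Γ.sign_mem u v h with h' | h' <;> simp [h']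
  sign_not := fun u v h => by
    show -Γ.sign u v = 0
    simp [Γ.sign_not u v h]

/-- The induced signed subgraph on a set of vertices. -/
def induce (Γ : SignedGraph V) (S : Set V) : SignedGraph S where
  G := { Adj := fun u v => Γ.G.Adj u v
         symm := ⟨fun u v h => Γ.G.adj_symm h⟩
         loopless := ⟨fun u h => Γ.G.loopless.irrefl u h⟩ }
  sign := fun u v => Γ.sign u v
  sign_symm := fun u v => Γ.sign_symm u v
  sign_mem := fun u v h => Γ.sign_mem u v h
  sign_not := fun u v h => Γ.sign_not u v h

/-- `S` is a balanced clique of `Γ`: it induces a complete subgraph which is balanced. -/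
def IsBalancedClique [DecidableEq V] (Γ : SignedGraph V) (S : Finset V) : Prop :=
  (∀ u ∈ S, ∀ v ∈ S, u ≠ v → Γ.G.Adj u v) ∧ (Γ.induce (S : Set V)).Balanced

end SignedGraph

section AuxLemmas

open Matrix

variable {V : Type*} [Fintype V]

/-- Rayleigh-type bound: for a real symmetric matrix, the quadratic form is bounded by
`sSup (spectrum)` times the squared norm. -/
lemma rayleigh_le_sSup_spectrum [DecidableEq V] (M : Matrix V V ℝ) (hM : M.IsHermitian) (y : V → ℝ) :
    y ⬝ᵥ M *ᵥ y ≤ sSup (spectrum ℝ M) * (y ⬝ᵥ y) := by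
  classical
  set μ := sSup (spectrum ℝ M) with hμ
  have hbdd : BddAbove (spectrum ℝ M) := (M.finite_spectrum).bddAbove
  have hB : (μ • (1 : Matrix V V ℝ) - M).IsHermitian := by
    unfold Matrix.IsHermitian
    rw [conjTranspose_sub, conjTranspose_smul, conjTranspose_one, hM.eq, star_trivial]
  have hspec : ∀ ν ∈ spectrum ℝ (μ • (1 : Matrix V V ℝ) - M), 0 ≤ ν := by
    intro ν hν
    have h1 : μ • (1 : Matrix V V ℝ) = algebraMap ℝ (Matrix V V ℝ) μ := by
      rw [Algebra.algebraMap_eq_smul_one]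
    rw [h1, ← spectrum.singleton_sub_eq] at hν
    obtain ⟨a, ha, b, hb, rfl⟩ := hν
    rw [Set.mem_singleton_iff] at ha
    subst ha
    have : b ≤ μ := le_csSup hbdd hb
    show (0:ℝ) ≤ μ - b
    linarith
  have hpos : (μ • (1 : Matrix V V ℝ) - M).PosSemidef := by
    refine hB.posSemidef_iff_eigenvalues_nonneg.mpr fun i => ?_
    exact hspec _ (hB.eigenvalues_mem_spectrum_real i)
  have h2 := hpos.dotProduct_mulVec_nonneg y
  rw [star_trivial, sub_mulVec, dotProduct_sub, smul_mulVec, one_mulVec,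
    dotProduct_smul] at h2
  simp only [smul_eq_mul] at h2
  linarith

/-- Quadratic form change when perturbing a symmetric matrix at one symmetric pair. -/
lemma quad_form_perturb [DecidableEq V] (A A' : Matrix V V ℝ) (r s : V) (hrs : r ≠ s) (d : ℝ)
    (hdiff : ∀ u v, A' u v = A u v + (if (u = r ∧ v = s) ∨ (u = s ∧ v = r) then d else 0))
    (y : V → ℝ) :
    y ⬝ᵥ A' *ᵥ y = y ⬝ᵥ A *ᵥ y + 2 * d * (y r * y s) := by
  classical
  have key : ∀ u v, (if (u = r ∧ v = s) ∨ (u = s ∧ v = r) then d else 0)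
      = (if r = u ∧ s = v then d else 0) + (if s = u ∧ r = v then d else 0) := by
    intro u v
    by_cases h1 : u = r ∧ v = s
    · obtain ⟨rfl, rfl⟩ := h1
      rw [if_pos (Or.inl ⟨rfl, rfl⟩), if_pos ⟨rfl, rfl⟩,
        if_neg (fun h => hrs h.1.symm), add_zero]
    · by_cases h2 : u = s ∧ v = r
      · obtain ⟨rfl, rfl⟩ := h2
        rw [if_pos (Or.inr ⟨rfl, rfl⟩), if_neg (fun h => hrs h.1), zero_add,
          if_pos ⟨rfl, rfl⟩]
      · rw [if_neg (fun h => h.elim h1 h2), if_neg (fun h => h1 ⟨h.1.symm, h.2.symm⟩),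
          if_neg (fun h => h2 ⟨h.1.symm, h.2.symm⟩), add_zero]
  have hA' : A' = A + (Matrix.single r s d + Matrix.single s r d) := by
    ext u v
    rw [hdiff]
    simp only [Matrix.add_apply, Matrix.single, Matrix.of_apply]
    rw [key u v]
  rw [hA', add_mulVec, dotProduct_add, add_mulVec, dotProduct_add,
    single_mulVec, single_mulVec]
  have e1 : Function.update (0 : V → ℝ) r (d * y s) = Pi.single r (d * y s) := rfl
  have e2 : Function.update (0 : V → ℝ) s (d * y r) = Pi.single s (d * y r) := rfl
  rw [e1, e2, dotProduct_single, dotProduct_single]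
  ring

lemma exists_good_vector_pos [DecidableEq V] (A A' : Matrix V V ℝ) (r s : V) (hrs : r ≠ s)
    (d : ℝ) (hd : 1 ≤ d)
    (hdiff : ∀ u v, A' u v = A u v + (if (u = r ∧ v = s) ∨ (u = s ∧ v = r) then d else 0))
    (lam : ℝ) (x : V → ℝ) (heig : A *ᵥ x = lam • x) (hp : 0 < x r * x s) :
    ∃ y : V → ℝ, 0 < y ⬝ᵥ y ∧ lam * (y ⬝ᵥ y) < y ⬝ᵥ A' *ᵥ y := by
  classical
  have hxr : x r ≠ 0 := by
    intro h; rw [h, zero_mul] at hp; exact lt_irrefl 0 hp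
  refine ⟨x, ?_, ?_⟩
  · calc (0:ℝ) < x r * x r := mul_self_pos.mpr hxr
    _ ≤ ∑ u, x u * x u :=
        Finset.single_le_sum (f := fun u => x u * x u)
          (fun u _ => mul_self_nonneg _) (Finset.mem_univ r)
    _ = x ⬝ᵥ x := rfl
  · rw [quad_form_perturb A A' r s hrs d hdiff, heig, dotProduct_smul, smul_eq_mul]
    nlinarith

lemma exists_good_vector_zero [DecidableEq V] (A A' : Matrix V V ℝ) (hA : A.IsHermitian) (r s : V) (hrs : r ≠ s)
    (d : ℝ) (hd : 1 ≤ d)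
    (hdiff : ∀ u v, A' u v = A u v + (if (u = r ∧ v = s) ∨ (u = s ∧ v = r) then d else 0))
    (hss : A s s = 0)
    (lam : ℝ) (x : V → ℝ) (heig : A *ᵥ x = lam • x) (hxs : x s = 0) (hxr : x r ≠ 0) :
    ∃ y : V → ℝ, 0 < y ⬝ᵥ y ∧ lam * (y ⬝ᵥ y) < y ⬝ᵥ A' *ᵥ y := by
  classical
  have ht : (0:ℝ) < |lam| + 1 := by positivity
  set ε : ℝ := d * x r / (|lam| + 1) with hε
  have hεne : ε ≠ 0 :=
    div_ne_zero (mul_ne_zero (by linarith) hxr) (ne_of_gt ht)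
  have hε2 : ε * (|lam| + 1) = d * x r := div_mul_cancel₀ _ (ne_of_gt ht)
  set z : V → ℝ := Pi.single s 1 with hz
  have hzs : z s = 1 := Pi.single_eq_same s 1
  have hzr : z r = 0 := Pi.single_eq_of_ne hrs 1
  set y : V → ℝ := x + ε • z with hy
  -- dot products with z
  have hxz : x ⬝ᵥ z = 0 := by rw [hz, dotProduct_single, hxs, zero_mul]
  have hzx : z ⬝ᵥ x = 0 := by rw [hz, single_dotProduct, hxs, mul_zero]
  have hzz : z ⬝ᵥ z = 1 := by simp [hz, single_dotProduct]
  -- A *ᵥ z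
  have hxAz : x ⬝ᵥ (A *ᵥ z) = 0 := by
    rw [hz, mulVec_single]
    have : ∑ u, x u * (A u s * 1) = ∑ u, A s u * x u := by
      refine Finset.sum_congr rfl fun u _ => ?_
      have := hA.apply u s
      rw [star_trivial] at this
      rw [this]; ring
    calc x ⬝ᵥ (fun u => A u s * 1) = ∑ u, x u * (A u s * 1) := rfl
    _ = ∑ u, A s u * x u := this
    _ = (A *ᵥ x) s := rfl
    _ = 0 := by rw [heig]; simp [hxs]
  have hzAz : z ⬝ᵥ (A *ᵥ z) = 0 := by
    rw [hz, mulVec_single, single_dotProduct]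
    simp [hss]
  have hzAx : z ⬝ᵥ (A *ᵥ x) = 0 := by
    rw [heig, dotProduct_smul, hzx, smul_eq_mul, mul_zero]
  -- norm of y
  have hyy : y ⬝ᵥ y = x ⬝ᵥ x + ε * ε := by
    rw [hy, dotProduct_add, add_dotProduct, add_dotProduct, dotProduct_smul, smul_dotProduct,
      smul_dotProduct, dotProduct_smul, hxz, hzx, hzz]
    simp only [smul_eq_mul]; ring
  have hxx : (0:ℝ) ≤ x ⬝ᵥ x := Finset.sum_nonneg fun u _ => mul_self_nonneg _
  have hypos : 0 < y ⬝ᵥ y := by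
    rw [hyy]
    have := mul_self_pos.mpr hεne
    linarith
  -- quadratic form of y for A
  have hyAy : y ⬝ᵥ A *ᵥ y = lam * (x ⬝ᵥ x) := by
    rw [hy]
    simp only [mulVec_add, mulVec_smul, dotProduct_add, add_dotProduct, dotProduct_smul,
      smul_dotProduct, smul_eq_mul, heig, hxAz, hzAz, hzx, hxz]
    ring
  refine ⟨y, hypos, ?_⟩
  rw [quad_form_perturb A A' r s hrs d hdiff, hyAy, hyy]
  have hyr : y r = x r := by rw [hy]; simp [hzr]
  have hys : y s = ε := by rw [hy]; simp [hzs, hxs]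
  rw [hyr, hys]
  have h3 : 2 * d * (x r * ε) = 2 * (|lam| + 1) * (ε * ε) := by
    linear_combination (-2 * ε) * hε2
  rw [h3]
  have h4 : 0 < ε * ε := mul_self_pos.mpr hεne
  nlinarith [le_abs_self lam, abs_nonneg lam]

end AuxLemmas

open SignedGraph in
/-- Removing a negative edge `r s` with `x_r x_s ≥ 0` and `x_r, x_s` not both
zero (where `x` is an eigenvector for `λ₁`), or reversing its sign to positive, strictly
increases the largest eigenvalue. -/
theorem lambda1_lt_of_remove_or_flip_negative_edge {V : Type*} [Fintype V]
    (Γ Γ' : SignedGraph V) (r s : V) (hneg : Γ.sign r s = -1)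
    (x : V → ℝ) (hx0 : x ≠ 0) (heig : Γ.adjMatrix.mulVec x = Γ.lambda1 • x)
    (hprod : 0 ≤ x r * x s) (hnz : x r ≠ 0 ∨ x s ≠ 0)
    (hnew : Γ'.sign r s = 0 ∨ Γ'.sign r s = 1)
    (hrest : ∀ u v : V, ¬ ((u = r ∧ v = s) ∨ (u = s ∧ v = r)) → Γ'.sign u v = Γ.sign u v) :
    Γ.lambda1 < Γ'.lambda1 := by
  classical
  set A := Γ.adjMatrix with hAdef
  set A' := Γ'.adjMatrix with hA'def
  set lam := Γ.lambda1 with hlam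
  have hrs : r ≠ s := by
    intro h
    rw [h, Γ.sign_not s s (Γ.G.loopless.irrefl s)] at hneg
    exact absurd hneg (by norm_num)
  have hA : A.IsHermitian := by
    ext u v
    simp only [hAdef, Matrix.conjTranspose_apply, SignedGraph.adjMatrix, star_trivial]
    exact_mod_cast congrArg (fun z : ℤ => (z : ℝ)) (Γ.sign_symm v u)
  have hA' : A'.IsHermitian := by
    ext u v
    simp only [hA'def, Matrix.conjTranspose_apply, SignedGraph.adjMatrix, star_trivial]
    exact_mod_cast congrArg (fun z : ℤ => (z : ℝ)) (Γ'.sign_symm v u)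
  set d : ℝ := (Γ'.sign r s : ℝ) + 1 with hd_def
  have hd : 1 ≤ d := by
    rcases hnew with h | h <;> rw [hd_def, h] <;> norm_num
  have hdiff : ∀ u v, A' u v = A u v + (if (u = r ∧ v = s) ∨ (u = s ∧ v = r) then d else 0) := by
    intro u v
    by_cases h : (u = r ∧ v = s) ∨ (u = s ∧ v = r)
    · rw [if_pos h]
      rcases h with ⟨rfl, rfl⟩ | ⟨rfl, rfl⟩
      · show ((Γ'.sign u v : ℝ)) = ((Γ.sign u v : ℝ)) + d
        rw [hneg, hd_def]; push_cast; ring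
      · show ((Γ'.sign u v : ℝ)) = ((Γ.sign u v : ℝ)) + d
        rw [Γ'.sign_symm u v, Γ.sign_symm u v, hneg, hd_def]; push_cast; ring
    · rw [if_neg h, add_zero]
      show ((Γ'.sign u v : ℝ)) = ((Γ.sign u v : ℝ))
      rw [hrest u v h]
  have hss : A s s = 0 := by
    show ((Γ.sign s s : ℝ)) = 0
    rw [Γ.sign_not s s (Γ.G.loopless.irrefl s)]; norm_num
  have hrr : A r r = 0 := by
    show ((Γ.sign r r : ℝ)) = 0
    rw [Γ.sign_not r r (Γ.G.loopless.irrefl r)]; norm_num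
  have hdiff' : ∀ u v, A' u v = A u v + (if (u = s ∧ v = r) ∨ (u = r ∧ v = s) then d else 0) := by
    intro u v
    rw [hdiff u v]
    congr 1
    exact (if_congr (or_comm) rfl rfl).symm
  -- obtain the test vector
  have hEx : ∃ y : V → ℝ, 0 < dotProduct y y ∧
      lam * dotProduct y y < dotProduct y (A'.mulVec y) := by
    rcases lt_or_eq_of_le hprod with hp | hp
    · exact exists_good_vector_pos A A' r s hrs d hd hdiff lam x heig hp
    · rcases mul_eq_zero.mp hp.symm with h | h
      · have hxs : x s ≠ 0 := by
          rcases hnz with h' | h'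
          · exact absurd h h'
          · exact h'
        exact exists_good_vector_zero A A' hA s r hrs.symm d hd hdiff' hrr lam x heig h hxs
      · have hxr : x r ≠ 0 := by
          rcases hnz with h' | h'
          · exact h'
          · exact absurd h h'
        exact exists_good_vector_zero A A' hA r s hrs d hd hdiff hss lam x heig h hxr
  obtain ⟨y, hy0, hy⟩ := hEx
  have hR : dotProduct y (A'.mulVec y) ≤ Γ'.lambda1 * dotProduct y y := by
    have h1 : Γ'.lambda1 = sSup (spectrum ℝ A') := rfl
    rw [h1]
    exact rayleigh_le_sSup_spectrum A' hA' y
  have : lam * dotProduct y y < Γ'.lambda1 * dotProduct y y := lt_of_lt_of_le hy hR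
  exact (mul_lt_mul_iff_left₀ hy0).mp this
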